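/- (Julia's Lemma, simplified version) Let φ be an analytic self-map of 𝔻, ζ ∈ ∂𝔻, and pₖ ∈ 𝔻 a sequence with pₖ → ζ and φ(pₖ) → ζ, such that (1 − |φ(pₖ)|)/(1 − |pₖ|) → d > 0. Then for every t > 0, φ(H(t)) ⊆ H(dt), where H(t) = {z ∈ 𝔻 : (1 − |z|²)/|ζ − z|² > 1/t} is the horodisk of parameter t at ζ. -/

import Mathlib

open Complex Metric Filter Set

local notation "conj'" => starRingEnd ℂ

/-- key algebraic identity -/
lemma julia_normSq_identity (a z : ℂ) :
    normSq (1 - conj' a * z) - normSq (a - z) = (1 - normSq a) * (1 - normSq z) := by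
  have h1 := Complex.mul_conj (1 - conj' a * z)
  have h2 := Complex.mul_conj (a - z)
  have h3 := Complex.mul_conj a
  have h4 := Complex.mul_conj z
  have : ((normSq (1 - conj' a * z) : ℂ)) - normSq (a - z)
      = ((1 - normSq a) * (1 - normSq z) : ℝ) := by
    push_cast
    rw [← h1, ← h2, ← h3, ← h4]
    simp only [map_sub, map_mul, map_one, Complex.conj_conj]
    ring
  exact_mod_cast this

lemma julia_denom_ne' (a z : ℂ) (ha : ‖a‖ ≤ 1) (hz : ‖z‖ < 1) :
    1 - conj' a * z ≠ 0 := by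
  intro h
  have : ‖conj' a * z‖ < 1 := by
    rw [norm_mul, Complex.norm_conj]
    nlinarith [norm_nonneg a, norm_nonneg z]
  have h1 : conj' a * z = 1 := by linear_combination -h
  rw [h1] at this
  simp at this

lemma julia_denom_ne (a z : ℂ) (ha : ‖a‖ < 1) (hz : ‖z‖ < 1) :
    1 - conj' a * z ≠ 0 :=
  julia_denom_ne' a z ha.le hz

lemma julia_mobius_mem (a z : ℂ) (ha : ‖a‖ < 1) (hz : ‖z‖ < 1) :
    ‖(a - z) / (1 - conj' a * z)‖ < 1 := by
  have hne := julia_denom_ne a z ha hz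
  have hpos : 0 < ‖1 - conj' a * z‖ := by
    simpa [norm_pos_iff] using hne
  rw [norm_div, div_lt_one hpos]
  have key := julia_normSq_identity a z
  have h1 : normSq a < 1 := by rw [← Complex.sq_norm]; nlinarith [norm_nonneg a]
  have h2 : normSq z < 1 := by rw [← Complex.sq_norm]; nlinarith [norm_nonneg z]
  have : normSq (a - z) < normSq (1 - conj' a * z) := by nlinarith
  have := Real.sqrt_lt_sqrt (normSq_nonneg _) this
  simpa [Complex.norm_def] using this

lemma julia_mobius_invol (a z : ℂ) (ha : ‖a‖ < 1) (hz : ‖z‖ < 1) :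
    (a - (a - z) / (1 - conj' a * z)) / (1 - conj' a * ((a - z) / (1 - conj' a * z))) = z := by
  have hne := julia_denom_ne a z ha hz
  have h1 : normSq a < 1 := by rw [← Complex.sq_norm]; nlinarith [norm_nonneg a]
  have h2 : (1 : ℂ) - a * conj' a ≠ 0 := by
    rw [Complex.mul_conj a]
    intro h
    have : (normSq a : ℂ) = 1 := by linear_combination -h
    have : normSq a = 1 := by exact_mod_cast this
    linarith
  have e1 : a - (a - z) / (1 - conj' a * z) = z * (1 - a * conj' a) / (1 - conj' a * z) := by
    rw [eq_div_iff hne, sub_mul, div_mul_cancel₀ _ hne]; ring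
  have e2 : 1 - conj' a * ((a - z) / (1 - conj' a * z)) = (1 - a * conj' a) / (1 - conj' a * z) := by
    rw [eq_div_iff hne, sub_mul, mul_assoc, div_mul_cancel₀ _ hne]; ring
  rw [e1, e2, div_div_div_cancel_right₀ hne, mul_div_cancel_right₀ _ h2]

lemma julia_schwarz_pick (φ : ℂ → ℂ)
    (hd : DifferentiableOn ℂ φ (ball 0 1))
    (hm : Set.MapsTo φ (ball 0 1) (ball 0 1))
    (z w : ℂ) (hz : z ∈ ball (0:ℂ) 1) (hw : w ∈ ball (0:ℂ) 1) :
    ‖(φ w - φ z) / (1 - conj' (φ w) * φ z)‖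
      ≤ ‖(w - z) / (1 - conj' w * z)‖ := by
  rw [mem_ball_zero_iff] at hz hw
  set m : ℂ → ℂ → ℂ := fun a u => (a - u) / (1 - conj' a * u) with hm_def
  have hφw : ‖φ w‖ < 1 := by
    simpa [mem_ball_zero_iff] using hm (mem_ball_zero_iff.2 hw)
  set g : ℂ → ℂ := fun u => m (φ w) (φ (m w u)) with hg_def
  have hmemw : ∀ u ∈ ball (0:ℂ) 1, m w u ∈ ball (0:ℂ) 1 := fun u hu => by
    rw [mem_ball_zero_iff] at hu ⊢
    exact julia_mobius_mem w u hw hu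
  have hmaps : Set.MapsTo g (ball 0 1) (ball 0 1) := by
    intro u hu
    have h1 := hmemw u hu
    have h2 := hm h1
    rw [mem_ball_zero_iff] at h2 ⊢
    exact julia_mobius_mem (φ w) (φ (m w u)) hφw h2
  have hgd : DifferentiableOn ℂ g (ball 0 1) := by
    have h1 : DifferentiableOn ℂ (fun u => m w u) (ball 0 1) := by
      apply DifferentiableOn.div
      · exact (differentiable_const w |>.sub differentiable_id).differentiableOn
      · exact (differentiable_const 1 |>.sub
          ((differentiable_const (conj' w)).mul differentiable_id)).differentiableOn
      · intro u hu
        exact julia_denom_ne w u hw (mem_ball_zero_iff.1 hu)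
    have h2 : DifferentiableOn ℂ (fun u => φ (m w u)) (ball 0 1) :=
      hd.comp h1 hmemw
    apply DifferentiableOn.div
    · exact (differentiableOn_const (φ w)).sub h2
    · exact (differentiableOn_const 1).sub ((differentiableOn_const (conj' (φ w))).mul h2)
    · intro u hu
      exact julia_denom_ne (φ w) (φ (m w u)) hφw
        (mem_ball_zero_iff.1 (hm (hmemw u hu)))
  have hg0 : g 0 = 0 := by
    have hmw0 : m w 0 = w := by simp [hm_def]
    simp [hg_def, hmw0, hm_def]
  have hmwz : ‖m w z‖ < 1 := julia_mobius_mem w z hw hz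
  have key := Complex.norm_le_norm_of_mapsTo_ball hgd (hmaps.mono_right ball_subset_closedBall) hg0 (z := m w z) (by simpa)
  have hinv : m w (m w z) = z := julia_mobius_invol w z hw hz
  rw [hg_def] at key
  simp only [hinv] at key
  exact key

lemma julia_sp_key (φ : ℂ → ℂ)
    (hd : DifferentiableOn ℂ φ (ball 0 1))
    (hm : Set.MapsTo φ (ball 0 1) (ball 0 1))
    (z w : ℂ) (hz : z ∈ ball (0:ℂ) 1) (hw : w ∈ ball (0:ℂ) 1) :
    (1 - normSq z) * (1 - normSq w) / normSq (1 - conj' w * z)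
      ≤ (1 - normSq (φ z)) * (1 - normSq (φ w)) / normSq (1 - conj' (φ w) * φ z) := by
  have hz' := mem_ball_zero_iff.1 hz
  have hw' := mem_ball_zero_iff.1 hw
  have hφz : ‖φ z‖ < 1 := mem_ball_zero_iff.1 (hm hz)
  have hφw : ‖φ w‖ < 1 := mem_ball_zero_iff.1 (hm hw)
  have hB : 0 < normSq (1 - conj' w * z) := by
    rw [normSq_pos]; exact julia_denom_ne w z hw' hz'
  have hD : 0 < normSq (1 - conj' (φ w) * φ z) := by
    rw [normSq_pos]; exact julia_denom_ne (φ w) (φ z) hφw hφz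
  have habs := julia_schwarz_pick φ hd hm z w hz hw
  have hsq : normSq ((φ w - φ z) / (1 - conj' (φ w) * φ z))
      ≤ normSq ((w - z) / (1 - conj' w * z)) := by
    rw [← Complex.sq_norm, ← Complex.sq_norm]
    exact pow_le_pow_left₀ (norm_nonneg _) habs 2
  rw [map_div₀, map_div₀] at hsq
  have e1 := julia_normSq_identity w z
  have e2 := julia_normSq_identity (φ w) (φ z)
  rw [div_le_div_iff₀ hB hD]
  rw [div_le_div_iff₀ hD hB] at hsq
  nlinarith [hsq, hB, hD, normSq_nonneg (w - z), normSq_nonneg (φ w - φ z)]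

theorem julia_lemma (φ : ℂ → ℂ)
    (hd : DifferentiableOn ℂ φ (ball 0 1))
    (hm : Set.MapsTo φ (ball 0 1) (ball 0 1))
    (ζ : ℂ) (hζ : ‖ζ‖ = 1)
    (p : ℕ → ℂ) (hp : ∀ k, p k ∈ ball (0:ℂ) 1)
    (hpζ : Tendsto p atTop (nhds ζ))
    (hφpζ : Tendsto (fun k => φ (p k)) atTop (nhds ζ))
    (d : ℝ) (hdpos : 0 < d)
    (hratio : Tendsto (fun k => (1 - ‖φ (p k)‖) / (1 - ‖p k‖))
      atTop (nhds d)) :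
    ∀ t : ℝ, 0 < t → ∀ z ∈ ball (0:ℂ) 1,
      1 / t < (1 - ‖z‖ ^ 2) / ‖ζ - z‖ ^ 2 →
      1 / (d * t) < (1 - ‖φ z‖ ^ 2) / ‖ζ - φ z‖ ^ 2 := by
  intro t ht z hzball hlt
  have hz' : ‖z‖ < 1 := mem_ball_zero_iff.1 hzball
  have hφz : ‖φ z‖ < 1 := mem_ball_zero_iff.1 (hm hzball)
  have hpk : ∀ k, ‖p k‖ < 1 := fun k => mem_ball_zero_iff.1 (hp k)
  have hφpk : ∀ k, ‖φ (p k)‖ < 1 := fun k => mem_ball_zero_iff.1 (hm (hp k))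
  -- per-k inequality
  have hkey : ∀ k, (1 - normSq z) ≤ (1 - normSq (φ z)) *
      (((1 - normSq (φ (p k))) / (1 - normSq (p k))) *
       (normSq (1 - conj' (p k) * z) / normSq (1 - conj' (φ (p k)) * φ z))) := by
    intro k
    have h := julia_sp_key φ hd hm z (p k) hzball (hp k)
    have hB : 0 < normSq (1 - conj' (p k) * z) :=
      normSq_pos.2 (julia_denom_ne _ _ (hpk k) hz')
    have hD : 0 < normSq (1 - conj' (φ (p k)) * φ z) :=
      normSq_pos.2 (julia_denom_ne _ _ (hφpk k) hφz)
    have hnp : 0 < 1 - normSq (p k) := by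
      rw [← Complex.sq_norm]; nlinarith [norm_nonneg (p k), hpk k]
    have hnφp : 0 < 1 - normSq (φ (p k)) := by
      rw [← Complex.sq_norm]; nlinarith [norm_nonneg (φ (p k)), hφpk k]
    rw [div_le_div_iff₀ hB hD] at h
    have e3 : (1 - normSq (φ z)) *
        (((1 - normSq (φ (p k))) / (1 - normSq (p k))) *
         (normSq (1 - conj' (p k) * z) / normSq (1 - conj' (φ (p k)) * φ z)))
        = ((1 - normSq (φ z)) * ((1 - normSq (φ (p k))) * normSq (1 - conj' (p k) * z)))
          / ((1 - normSq (p k)) * normSq (1 - conj' (φ (p k)) * φ z)) := by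
      field_simp
    rw [e3, le_div_iff₀ (mul_pos hnp hD)]
    nlinarith [h]
  -- limits
  have habs_p : Tendsto (fun k => ‖p k‖) atTop (nhds 1) := by
    have := (continuous_norm.tendsto ζ).comp hpζ
    rwa [hζ] at this
  have habs_φp : Tendsto (fun k => ‖φ (p k)‖) atTop (nhds 1) := by
    have := (continuous_norm.tendsto ζ).comp hφpζ
    rwa [hζ] at this
  have hr : Tendsto (fun k => (1 - normSq (φ (p k))) / (1 - normSq (p k)))
      atTop (nhds d) := by
    have h2 : Tendsto (fun k => (1 + ‖φ (p k)‖) / (1 + ‖p k‖))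
        atTop (nhds 1) := by
      have := (tendsto_const_nhds (x := (1:ℝ)).add habs_φp).div
        ((tendsto_const_nhds (x := (1:ℝ))).add habs_p) (by norm_num)
      norm_num at this
      exact this
    have h3 := hratio.mul h2
    rw [mul_one] at h3
    refine h3.congr fun k => ?_
    have h1k : (0:ℝ) < 1 - ‖p k‖ := by linarith [hpk k]
    have h2k : (0:ℝ) < 1 + ‖p k‖ := by
      linarith [norm_nonneg (p k)]
    rw [← Complex.sq_norm, ← Complex.sq_norm, div_mul_div_comm,
      show (1 - ‖φ (p k)‖) * (1 + ‖φ (p k)‖)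
        = 1 - ‖φ (p k)‖ ^ 2 from by ring,
      show (1 - ‖p k‖) * (1 + ‖p k‖)
        = 1 - ‖p k‖ ^ 2 from by ring]
  have hconjp : Tendsto (fun k => (conj' (p k) : ℂ)) atTop (nhds (conj' ζ)) :=
    (Complex.continuous_conj.tendsto ζ).comp hpζ
  have hconjφp : Tendsto (fun k => (conj' (φ (p k)) : ℂ)) atTop (nhds (conj' ζ)) :=
    (Complex.continuous_conj.tendsto ζ).comp hφpζ
  have hDζ : normSq (1 - conj' ζ * φ z) ≠ 0 :=
    normSq_pos.2 (julia_denom_ne' ζ (φ z) hζ.le hφz) |>.ne'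
  have hq : Tendsto (fun k => normSq (1 - conj' (p k) * z)
        / normSq (1 - conj' (φ (p k)) * φ z)) atTop
      (nhds (normSq (1 - conj' ζ * z) / normSq (1 - conj' ζ * φ z))) := by
    apply Tendsto.div
    · exact (Complex.continuous_normSq.tendsto _).comp
        (tendsto_const_nhds.sub (hconjp.mul_const z))
    · exact (Complex.continuous_normSq.tendsto _).comp
        (tendsto_const_nhds.sub (hconjφp.mul_const (φ z)))
    · exact hDζ
  have hlim : Tendsto (fun k => (1 - normSq (φ z)) *
      (((1 - normSq (φ (p k))) / (1 - normSq (p k))) *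
       (normSq (1 - conj' (p k) * z) / normSq (1 - conj' (φ (p k)) * φ z)))) atTop
      (nhds ((1 - normSq (φ z)) *
        (d * (normSq (1 - conj' ζ * z) / normSq (1 - conj' ζ * φ z))))) :=
    tendsto_const_nhds.mul (hr.mul hq)
  have hineq := ge_of_tendsto' hlim hkey
  -- rewrite normSq (1 - conj ζ w) as |ζ - w|²
  have hζ2 : normSq ζ = 1 := by rw [← Complex.sq_norm, hζ]; norm_num
  have hkey2 : ∀ w : ℂ, normSq (1 - conj' ζ * w) = ‖ζ - w‖ ^ 2 := by
    intro w
    have h0 : conj' ζ * ζ = 1 := by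
      rw [mul_comm, Complex.mul_conj, hζ2]; norm_num
    have h1 : 1 - conj' ζ * w = conj' ζ * (ζ - w) := by
      linear_combination -h0
    rw [h1, map_mul, normSq_conj, hζ2, one_mul, Complex.sq_norm]
  rw [hkey2 z, hkey2 (φ z), ← Complex.sq_norm z, ← Complex.sq_norm (φ z)] at hineq
  -- final arithmetic
  have hA : 0 < ‖ζ - z‖ ^ 2 := by
    have h5 : ζ - z ≠ 0 := by
      intro h
      have : ζ = z := by linear_combination h
      rw [this] at hζ; linarith
    have h6 : ‖ζ - z‖ ≠ 0 := (norm_ne_zero_iff.mpr h5)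
    positivity
  have hBp : 0 < ‖ζ - φ z‖ ^ 2 := by
    have h5 : ζ - φ z ≠ 0 := by
      intro h
      have : ζ = φ z := by linear_combination h
      rw [this] at hζ; linarith
    have h6 : ‖ζ - φ z‖ ≠ 0 := (norm_ne_zero_iff.mpr h5)
    positivity
  have ha : 0 < 1 - ‖z‖ ^ 2 := by
    nlinarith [norm_nonneg z]
  have hb : 0 < 1 - ‖φ z‖ ^ 2 := by
    nlinarith [norm_nonneg (φ z)]
  rw [div_lt_div_iff₀ ht hA] at hlt
  rw [div_lt_div_iff₀ (by positivity) hBp]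
  have hineq' : (1 - ‖z‖ ^ 2) * ‖ζ - φ z‖ ^ 2
      ≤ (1 - ‖φ z‖ ^ 2) * (d * ‖ζ - z‖ ^ 2) := by
    have e4 : (1 - ‖φ z‖ ^ 2) *
        (d * (‖ζ - z‖ ^ 2 / ‖ζ - φ z‖ ^ 2))
        = ((1 - ‖φ z‖ ^ 2) * (d * ‖ζ - z‖ ^ 2))
          / ‖ζ - φ z‖ ^ 2 := by
      field_simp
    rw [e4, le_div_iff₀ hBp] at hineq
    nlinarith [hineq]
  nlinarith [hineq', hlt, mul_pos hb hdpos, mul_pos (mul_pos hb hdpos) ht, ha]
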